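/- Let A ⊂ [0, 2π) and r > 0. Define T = {(ρ cos θ, ρ sin θ) : θ ∈ A, ρ ∈ [0, r]} ⊂ ℝ². Then the Lebesgue outer measure of T equals (1/2) r² times the one-dimensional Lebesgue outer measure of A. -/

import Mathlib

open MeasureTheory Set

namespace PolarSectorAux

noncomputable section

/-- The polar map, angle first. -/
def ψ (x : ℝ × ℝ) : ℝ × ℝ := (x.2 * Real.cos x.1, x.2 * Real.sin x.1)

/-- Domain of injectivity. -/
def D : Set (ℝ × ℝ) := Set.Ico 0 (2 * Real.pi) ×ˢ Set.Ioi (0 : ℝ)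

lemma measurableSet_D : MeasurableSet D :=
  measurableSet_Ico.prod measurableSet_Ioi

lemma continuous_ψ : Continuous ψ := by
  unfold ψ
  fun_prop

/-- Explicit derivative of the polar map. -/
def ψ' (x : ℝ × ℝ) : ℝ × ℝ →L[ℝ] ℝ × ℝ :=
  LinearMap.toContinuousLinearMap
    (Matrix.toLin (Module.Basis.finTwoProd ℝ) (Module.Basis.finTwoProd ℝ)
      !![-x.2 * Real.sin x.1, Real.cos x.1; x.2 * Real.cos x.1, Real.sin x.1])

lemma det_ψ' (x : ℝ × ℝ) : (ψ' x).det = -x.2 := by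
  have : (ψ' x : (ℝ × ℝ) →ₗ[ℝ] ℝ × ℝ) =
      Matrix.toLin (Module.Basis.finTwoProd ℝ) (Module.Basis.finTwoProd ℝ)
        !![-x.2 * Real.sin x.1, Real.cos x.1; x.2 * Real.cos x.1, Real.sin x.1] := by
    simp [ψ']
  rw [ContinuousLinearMap.det, this, LinearMap.det_toLin, Matrix.det_fin_two_of]
  have h := Real.sin_sq_add_cos_sq x.1
  linear_combination (-x.2) * h

lemma hasFDerivAt_ψ (x : ℝ × ℝ) : HasFDerivAt ψ (ψ' x) x := by
  have hfst : HasFDerivAt (fun y : ℝ × ℝ => y.1) (ContinuousLinearMap.fst ℝ ℝ ℝ) x :=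
    hasFDerivAt_fst
  have hsnd : HasFDerivAt (fun y : ℝ × ℝ => y.2) (ContinuousLinearMap.snd ℝ ℝ ℝ) x :=
    hasFDerivAt_snd
  have hc : HasFDerivAt (fun y : ℝ × ℝ => Real.cos y.1)
      ((-Real.sin x.1) • (ContinuousLinearMap.fst ℝ ℝ ℝ)) x :=
    (Real.hasDerivAt_cos x.1).comp_hasFDerivAt x hfst
  have hs : HasFDerivAt (fun y : ℝ × ℝ => Real.sin y.1)
      ((Real.cos x.1) • (ContinuousLinearMap.fst ℝ ℝ ℝ)) x :=
    (Real.hasDerivAt_sin x.1).comp_hasFDerivAt x hfst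
  have h1 := hsnd.mul hc
  have h2 := hsnd.mul hs
  have hp := h1.prodMk h2
  have heq : ψ' x =
      (x.2 • ((-Real.sin x.1) • ContinuousLinearMap.fst ℝ ℝ ℝ) +
        Real.cos x.1 • ContinuousLinearMap.snd ℝ ℝ ℝ).prod
      (x.2 • ((Real.cos x.1) • ContinuousLinearMap.fst ℝ ℝ ℝ) +
        Real.sin x.1 • ContinuousLinearMap.snd ℝ ℝ ℝ) := by
    apply ContinuousLinearMap.ext
    intro v
    simp [ψ', Matrix.toLin_finTwoProd_apply, Prod.ext_iff]
    constructor <;> ring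
  rw [heq]
  exact hp

lemma injOn_ψ : Set.InjOn ψ D := by
  rintro x hx y hy hxy
  obtain ⟨hx1, hx2⟩ := hx
  obtain ⟨hy1, hy2⟩ := hy
  simp only [ψ, Prod.ext_iff] at hxy
  obtain ⟨h1, h2⟩ := hxy
  have hx2' : (0:ℝ) < x.2 := hx2
  have hy2' : (0:ℝ) < y.2 := hy2
  have hsq : x.2 ^ 2 = y.2 ^ 2 := by
    have hcs := Real.sin_sq_add_cos_sq x.1
    have hcs' := Real.sin_sq_add_cos_sq y.1
    have e1 : (x.2 * Real.cos x.1) ^ 2 = (y.2 * Real.cos y.1) ^ 2 := by rw [h1]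
    have e2 : (x.2 * Real.sin x.1) ^ 2 = (y.2 * Real.sin y.1) ^ 2 := by rw [h2]
    linear_combination e1 + e2 - x.2 ^ 2 * hcs + y.2 ^ 2 * hcs'
  have hr : x.2 = y.2 := by
    have hz : (x.2 - y.2) * (x.2 + y.2) = 0 := by linear_combination hsq
    rcases mul_eq_zero.mp hz with h | h
    · linarith [sub_eq_zero.mp h]
    · exfalso; linarith
  have hcos : Real.cos x.1 = Real.cos y.1 := by
    have := h1; rw [hr] at this
    exact mul_left_cancel₀ (ne_of_gt hy2') this
  have hsin : Real.sin x.1 = Real.sin y.1 := by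
    have := h2; rw [hr] at this
    exact mul_left_cancel₀ (ne_of_gt hy2') this
  have hangle : (x.1 : Real.Angle) = (y.1 : Real.Angle) :=
    Real.Angle.cos_sin_inj hcos hsin
  obtain ⟨k, hk⟩ := Real.Angle.angle_eq_iff_two_pi_dvd_sub.mp hangle
  have hπ := Real.pi_pos
  have hklt : |(k : ℝ)| < 1 := by
    have h1' : x.1 - y.1 < 2 * Real.pi := by
      obtain ⟨ha, hb⟩ := hx1; obtain ⟨hc, hd⟩ := hy1
      linarith
    have h2' : -(2 * Real.pi) < x.1 - y.1 := by
      obtain ⟨ha, hb⟩ := hx1; obtain ⟨hc, hd⟩ := hy1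
      linarith
    rw [abs_lt]
    constructor <;> nlinarith [hk]
  have hk0 : k = 0 := by
    have : |(k:ℝ)| < 1 := hklt
    have : (k:ℝ) = 0 := by
      rcases lt_trichotomy k 0 with h | h | h
      · exfalso
        have : (1:ℝ) ≤ |(k:ℝ)| := by
          rw [abs_of_neg (by exact_mod_cast h)]
          have : (k:ℝ) ≤ -1 := by exact_mod_cast Int.le_of_lt_add_one (by omega : k < -1 + 1)
          linarith
        linarith
      · exact_mod_cast h
      · exfalso
        have : (1:ℝ) ≤ |(k:ℝ)| := by
          rw [abs_of_pos (by exact_mod_cast h)]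
          exact_mod_cast h
        linarith
    exact_mod_cast this
  have : x.1 - y.1 = 0 := by rw [hk] ; simp [hk0]
  have hθ : x.1 = y.1 := by linarith
  exact Prod.ext hθ hr

/-- The density measure. -/
def μd : Measure (ℝ × ℝ) := volume.withDensity fun x : ℝ × ℝ => ENNReal.ofReal x.2

/-- Change of variables for measurable subsets of `D`. -/
lemma key_meas {u : Set (ℝ × ℝ)} (hu : MeasurableSet u) (hsub : u ⊆ D) :
    volume (ψ '' u) = μd u := by
  rw [μd, withDensity_apply _ hu,
    ← MeasureTheory.lintegral_abs_det_fderiv_eq_addHaar_image volume hu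
      (fun x _ => (hasFDerivAt_ψ x).hasFDerivWithinAt) (injOn_ψ.mono hsub)]
  apply setLIntegral_congr_fun hu
  intro x hx
  dsimp only
  rw [det_ψ', abs_neg, abs_of_pos (hsub hx).2]

/-- Change of variables for arbitrary subsets of `D` (outer measure form). -/
lemma key {s : Set (ℝ × ℝ)} (hsub : s ⊆ D) : volume (ψ '' s) = μd s := by
  apply le_antisymm
  · set u := toMeasurable μd s ∩ D with hu_def
    have hsu : s ⊆ u := subset_inter (subset_toMeasurable _ _) hsub
    have hu : MeasurableSet u := (measurableSet_toMeasurable _ _).inter measurableSet_D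
    calc volume (ψ '' s) ≤ volume (ψ '' u) := measure_mono (image_mono (f := ψ) hsu)
      _ = μd u := key_meas hu inter_subset_right
      _ ≤ μd (toMeasurable μd s) := measure_mono inter_subset_left
      _ = μd s := measure_toMeasurable _
  · set v := ψ ⁻¹' (toMeasurable volume (ψ '' s)) ∩ D with hv_def
    have hsv : s ⊆ v := by
      intro x hx
      exact ⟨subset_toMeasurable _ _ (mem_image_of_mem _ hx), hsub hx⟩
    have hv : MeasurableSet v :=
      (continuous_ψ.measurable (measurableSet_toMeasurable _ _)).inter measurableSet_D
    calc μd s ≤ μd v := measure_mono hsv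
      _ = volume (ψ '' v) := (key_meas hv inter_subset_right).symm
      _ ≤ volume (toMeasurable volume (ψ '' s)) := by
          apply measure_mono
          rintro p ⟨x, hx, rfl⟩
          exact hx.1
      _ = volume (ψ '' s) := measure_toMeasurable _

/-- Product representation of the density measure. -/
lemma μd_eq_prod :
    μd = (volume : Measure ℝ).prod ((volume : Measure ℝ).withDensity (fun x : ℝ => ENNReal.ofReal x)) := by
  haveI : SigmaFinite ((volume : Measure ℝ).withDensity (fun x : ℝ => ENNReal.ofReal x)) :=
    SigmaFinite.withDensity_ofReal (fun x => x)
  refine (Measure.prod_eq (μ := (volume : Measure ℝ))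
    (ν := (volume : Measure ℝ).withDensity (fun x : ℝ => ENNReal.ofReal x))
    (μν := μd) (fun s t hs ht => ?_)).symm
  show (volume.withDensity fun x : ℝ × ℝ => ENNReal.ofReal x.2) (s ×ˢ t) = _
  rw [withDensity_apply _ (hs.prod ht), MeasureTheory.Measure.volume_eq_prod,
    ← Measure.prod_restrict,
    lintegral_prod _ (measurable_snd.ennreal_ofReal.aemeasurable)]
  simp only
  rw [lintegral_const]
  simp only [Measure.restrict_apply_univ]
  rw [withDensity_apply _ ht, mul_comm]

lemma density_Ioc {r : ℝ} (hr : 0 < r) :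
    ((volume : Measure ℝ).withDensity (fun x : ℝ => ENNReal.ofReal x)) (Set.Ioc 0 r) =
      ENNReal.ofReal (1 / 2 * r ^ 2) := by
  rw [withDensity_apply _ measurableSet_Ioc]
  have hint : IntegrableOn (fun x : ℝ => x) (Set.Ioc 0 r) volume :=
    (continuous_id.integrableOn_Icc (a := 0) (b := r)).mono_set Set.Ioc_subset_Icc_self
  rw [← ofReal_integral_eq_lintegral_ofReal hint]
  · congr 1
    rw [← intervalIntegral.integral_of_le hr.le, integral_id]
    ring
  · rw [Filter.EventuallyLE, ae_restrict_iff' measurableSet_Ioc]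
    filter_upwards with x hx
    exact le_of_lt hx.1

end

end PolarSectorAux

open PolarSectorAux in
/-- The polar image of `A × [0, r]` has planar Lebesgue outer measure `(1/2) r² · ℒ₁*(A)`. -/
theorem polar_sector_outer_measure (A : Set ℝ) (hA : A ⊆ Set.Ico 0 (2 * Real.pi))
    (r : ℝ) (hr : 0 < r) :
    volume {p : ℝ × ℝ | ∃ θ ∈ A, ∃ ρ ∈ Set.Icc (0 : ℝ) r,
        p = (ρ * Real.cos θ, ρ * Real.sin θ)} =
      ENNReal.ofReal (1 / 2 * r ^ 2) * volume A := by
  have hT : {p : ℝ × ℝ | ∃ θ ∈ A, ∃ ρ ∈ Set.Icc (0 : ℝ) r,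
        p = (ρ * Real.cos θ, ρ * Real.sin θ)} = ψ '' (A ×ˢ Set.Icc 0 r) := by
    ext p
    simp only [Set.mem_setOf_eq, Set.mem_image, Set.mem_prod, ψ, Prod.exists]
    constructor
    · rintro ⟨θ, hθ, ρ, hρ, rfl⟩
      exact ⟨θ, ρ, ⟨hθ, hρ⟩, rfl⟩
    · rintro ⟨θ, ρ, ⟨hθ, hρ⟩, rfl⟩
      exact ⟨θ, hθ, ρ, hρ, rfl⟩
  rw [hT]
  have hsplit : A ×ˢ Set.Icc (0:ℝ) r = A ×ˢ Set.Ioc (0:ℝ) r ∪ A ×ˢ {(0:ℝ)} := by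
    rw [← Set.prod_union]
    congr 1
    ext x
    simp only [Set.mem_Icc, Set.mem_union, Set.mem_Ioc, Set.mem_singleton_iff]
    constructor
    · rintro ⟨h1, h2⟩
      rcases eq_or_lt_of_le h1 with h | h
      · right; exact h.symm
      · left; exact ⟨h, h2⟩
    · rintro (⟨h1, h2⟩ | rfl)
      · exact ⟨le_of_lt h1, h2⟩
      · exact ⟨le_refl _, hr.le⟩
  rw [hsplit, Set.image_union]
  have hnull : volume (ψ '' (A ×ˢ {(0:ℝ)})) = 0 := by
    refine measure_mono_null ?_ (measure_singleton (((0:ℝ),(0:ℝ)) : ℝ × ℝ))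
    rintro p ⟨x, ⟨_, hx2⟩, rfl⟩
    simp only [Set.mem_singleton_iff] at hx2 ⊢
    simp [ψ, hx2]
  have hdrop : volume (ψ '' (A ×ˢ Set.Ioc (0:ℝ) r) ∪ ψ '' (A ×ˢ ({(0:ℝ)} : Set ℝ))) =
      volume (ψ '' (A ×ˢ Set.Ioc (0:ℝ) r)) :=
    le_antisymm ((measure_union_le _ _).trans (by rw [hnull, add_zero]))
      (measure_mono subset_union_left)
  rw [hdrop]
  have hsub : A ×ˢ Set.Ioc (0:ℝ) r ⊆ D := by
    rintro x ⟨hx1, hx2⟩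
    exact ⟨hA hx1, hx2.1⟩
  rw [key hsub, μd_eq_prod, Measure.prod_prod, density_Ioc hr, mul_comm]
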